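/- For t > 1 the DF rate is eventually constant: for all S₂ ≥ (t−1)S₁, R_DF(S₂) = (1/2)log₂(1+S₁) + (1/2)log₂(1+tS₁). -/

import Mathlib

theorem RDF_eventually_constant (S₁ t : ℝ) (hS₁ : 0 < S₁) (ht : 1 < t) :
    let R_DF : ℝ → ℝ := fun S₂ => (1/2) *
      ⨆ ρ : Set.Icc (0:ℝ) 1,
        min (Real.logb 2 (1 + t * S₁) + Real.logb 2 (1 + (1 - (ρ:ℝ) ^ 2) * S₁))
          (Real.logb 2 (1 + S₁)
            + Real.logb 2 (1 + S₁ + S₂ + 2 * (ρ:ℝ) * Real.sqrt (S₁ * S₂)))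
    ∀ S₂ : ℝ, (t - 1) * S₁ ≤ S₂ →
      R_DF S₂ = (1/2) * Real.logb 2 (1 + S₁) + (1/2) * Real.logb 2 (1 + t * S₁) := by
  intro R_DF S₂ hS₂
  have hb : (1:ℝ) < 2 := one_lt_two
  have hub : ∀ ρ : Set.Icc (0:ℝ) 1,
      min (Real.logb 2 (1 + t * S₁) + Real.logb 2 (1 + (1 - (ρ:ℝ) ^ 2) * S₁))
        (Real.logb 2 (1 + S₁) + Real.logb 2 (1 + S₁ + S₂ + 2 * (ρ:ℝ) * Real.sqrt (S₁ * S₂)))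
      ≤ Real.logb 2 (1 + t * S₁) + Real.logb 2 (1 + S₁) := by
    intro ρ
    refine le_trans (min_le_left _ _) ?_
    have h0 := ρ.2.1
    have h1 := ρ.2.2
    have hpos : 0 < 1 + (1 - (ρ:ℝ) ^ 2) * S₁ := by
      nlinarith [mul_nonneg (by linarith : (0:ℝ) ≤ 1 - (ρ:ℝ)) (by linarith : (0:ℝ) ≤ 1 + (ρ:ℝ))]
    have hle : 1 + (1 - (ρ:ℝ) ^ 2) * S₁ ≤ 1 + S₁ := by nlinarith
    exact add_le_add le_rfl (Real.logb_le_logb_of_le hb hpos hle)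
  have hbdd : BddAbove (Set.range fun ρ : Set.Icc (0:ℝ) 1 =>
      min (Real.logb 2 (1 + t * S₁) + Real.logb 2 (1 + (1 - (ρ:ℝ) ^ 2) * S₁))
        (Real.logb 2 (1 + S₁) + Real.logb 2 (1 + S₁ + S₂ + 2 * (ρ:ℝ) * Real.sqrt (S₁ * S₂)))) :=
    ⟨_, by rintro x ⟨ρ, rfl⟩; exact hub ρ⟩
  obtain ⟨ρ₀, h0⟩ : ∃ ρ₀ : Set.Icc (0:ℝ) 1, (ρ₀ : ℝ) = 0 := ⟨⟨0, by norm_num⟩, rfl⟩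
  have hval : min (Real.logb 2 (1 + t * S₁) + Real.logb 2 (1 + (1 - (ρ₀:ℝ) ^ 2) * S₁))
      (Real.logb 2 (1 + S₁) + Real.logb 2 (1 + S₁ + S₂ + 2 * (ρ₀:ℝ) * Real.sqrt (S₁ * S₂)))
      = Real.logb 2 (1 + t * S₁) + Real.logb 2 (1 + S₁) := by
    rw [h0]
    have e1 : 1 + (1 - (0:ℝ) ^ 2) * S₁ = 1 + S₁ := by ring
    have e2 : 1 + S₁ + S₂ + 2 * (0:ℝ) * Real.sqrt (S₁ * S₂) = 1 + S₁ + S₂ := by ring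
    rw [e1, e2]
    apply min_eq_left
    have hpos : 0 < 1 + t * S₁ := by nlinarith
    have hle : 1 + t * S₁ ≤ 1 + S₁ + S₂ := by nlinarith
    have := Real.logb_le_logb_of_le hb hpos hle
    have hpos2 : 0 < 1 + S₁ := by linarith
    have := Real.logb_le_logb_of_le hb hpos2 (by nlinarith : 1 + S₁ ≤ 1 + t * S₁)
    linarith
  have hsup : (⨆ ρ : Set.Icc (0:ℝ) 1,
      min (Real.logb 2 (1 + t * S₁) + Real.logb 2 (1 + (1 - (ρ:ℝ) ^ 2) * S₁))
        (Real.logb 2 (1 + S₁) + Real.logb 2 (1 + S₁ + S₂ + 2 * (ρ:ℝ) * Real.sqrt (S₁ * S₂))))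
      = Real.logb 2 (1 + t * S₁) + Real.logb 2 (1 + S₁) := by
    refine le_antisymm (ciSup_le hub) ?_
    exact hval ▸ le_ciSup hbdd ρ₀
  show (1/2) * _ = _
  rw [hsup]; ring
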